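/- arXiv:2504.17835 — 2 statements merged into one kernel-verified Lean document; each statement's English description precedes it below -/
import Mathlib

section
/- For every finite word ω = (ω_1,…,ω_m) over the restricted alphabet I_{n>2} = {(k,n) ∈ I : n > 2} and all z, w in the closed unit disk 𝔻, |φ'_ω(z)| ≤ 4.3655·|φ'_ω(w)|, where φ_ω = φ_{ω_1}∘⋯∘φ_{ω_m}. -/
open Complex Metric Set
open scoped ENNReal

noncomputable section

/-- λ = √3 -/
def lam : ℝ := Real.sqrt 3

/-- The Möbius map f(z) = ((λ−1)z+1)/(−z+λ+1). -/
def apolF : ℂ → ℂ := fun z => (((lam : ℂ) - 1) * z + 1) / (-z + (lam : ℂ) + 1)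

/-- Rotation by angle θ. -/
def Rot (θ : ℝ) : ℂ → ℂ := fun z => Complex.exp ((θ : ℂ) * Complex.I) * z

/-- θ_k = (−1)^k · 2π/3 -/
def thetaA (k : ℕ) : ℝ := (-1 : ℝ) ^ k * (2 * Real.pi / 3)

/-- θ'_k = 2πk/3 -/
def thetaB (k : ℕ) : ℝ := 2 * Real.pi * k / 3

/-- The Apollonian generators φ_{k,n} = R_{θ'_k} ∘ f^n ∘ R_{θ_k} ∘ f. -/
def phi (k n : ℕ) : ℂ → ℂ := Rot (thetaB k) ∘ (apolF^[n]) ∘ Rot (thetaA k) ∘ apolF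

/-- The closed unit disk 𝔻. -/
def unitD : Set ℂ := Metric.closedBall (0 : ℂ) 1

/-- The Apollonian alphabet I = {1,…,6} × {1,2,3,…}. -/
def apolI : Set (ℕ × ℕ) := {p | 1 ≤ p.1 ∧ p.1 ≤ 6 ∧ 1 ≤ p.2}

/-- Composition φ_{ω₁}∘⋯∘φ_{ω_m} of a finite word ω = (ω₁,…,ω_m). -/
def wordComp (ω : List (ℕ × ℕ)) : ℂ → ℂ :=
  ω.foldr (fun p g => phi p.1 p.2 ∘ g) id

/-! ### Auxiliary machinery -/

/-- Generic Möbius expression. -/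
def mob (a b c d z : ℂ) : ℂ := (a * z + b) / (c * z + d)

lemma lam_sq : lam ^ 2 = 3 := Real.sq_sqrt (by norm_num)

lemma lam_lb : (1.732 : ℝ) ≤ lam := by
  have : (1.732 : ℝ) = Real.sqrt (1.732 ^ 2) := (Real.sqrt_sq (by norm_num)).symm
  rw [this, lam]
  exact Real.sqrt_le_sqrt (by norm_num)

lemma lam_ub : lam ≤ (1.7321 : ℝ) := by
  have : (1.7321 : ℝ) = Real.sqrt (1.7321 ^ 2) := (Real.sqrt_sq (by norm_num)).symm
  rw [this, lam]
  exact Real.sqrt_le_sqrt (by norm_num)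

lemma lam_pos : (0 : ℝ) < lam := by have := lam_lb; linarith

lemma clam_ne : ((lam : ℝ) : ℂ) ≠ 0 := by
  exact_mod_cast (ne_of_gt (show (0:ℝ) < lam from lam_pos))

lemma clam_sq : ((lam : ℝ) : ℂ) ^ 2 = 3 := by exact_mod_cast lam_sq

/-- Closed form of the iterates of `apolF`. -/
lemma apolF_iter (n : ℕ) (w : ℂ)
    (h : ∀ m : ℕ, (m : ℂ) * (1 - w) + (lam : ℂ) ≠ 0) :
    apolF^[n] w = (((lam : ℂ) - n) * w + n) / ((n : ℂ) * (1 - w) + lam) := by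
  induction n with
  | zero =>
      simp only [Function.iterate_zero, id_eq, Nat.cast_zero]
      rw [zero_mul, zero_add, sub_zero, add_zero, mul_comm, mul_div_assoc,
        div_self clam_ne, mul_one]
  | succ n ih =>
      have hdn : ((n : ℂ) * (1 - w) + lam) ≠ 0 := h n
      have hdn1 : (((n : ℂ) + 1) * (1 - w) + lam) ≠ 0 := by
        have := h (n + 1); push_cast at this; exact this
      rw [Function.iterate_succ_apply', ih]
      set N0 := ((lam : ℂ) - n) * w + n with hN0
      set D0 := ((n : ℂ) * (1 - w) + lam) with hD0
      have hnum : ((lam : ℂ) - 1) * (N0 / D0) + 1 = (((lam : ℂ) - 1) * N0 + D0) / D0 := by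
        field_simp
      have hden : -(N0 / D0) + (lam : ℂ) + 1 = (((lam : ℂ) + 1) * D0 - N0) / D0 := by
        field_simp; ring
      have hfac1 : ((lam : ℂ) - 1) * N0 + D0 = (lam : ℂ) * (((lam : ℂ) - (n + 1)) * w + (n + 1)) := by
        rw [hN0, hD0]; ring
      have hfac2 : ((lam : ℂ) + 1) * D0 - N0 = (lam : ℂ) * (((n : ℂ) + 1) * (1 - w) + lam) := by
        rw [hN0, hD0]; ring
      show (((lam : ℂ) - 1) * (N0 / D0) + 1) / (-(N0 / D0) + (lam : ℂ) + 1)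
          = (((lam : ℂ) - (n+1:ℕ)) * w + (n+1:ℕ)) / (((n+1:ℕ) : ℂ) * (1 - w) + lam)
      rw [hnum, hden, div_div_div_cancel_right₀ hdn, hfac1, hfac2,
        mul_div_mul_left _ _ clam_ne]
      push_cast
      ring_nf

def ga (E : ℂ) (n : ℕ) : ℂ := ((lam : ℂ) - n) * ((lam : ℂ) - 1) * E - n
def gb (E : ℂ) (n : ℕ) : ℂ := ((lam : ℂ) - n) * E + n * ((lam : ℂ) + 1)
def gc0 (E : ℂ) (n : ℕ) : ℂ := -(n : ℂ) * ((lam : ℂ) - 1) * E - ((n : ℂ) + lam)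
def gd0 (E : ℂ) (n : ℕ) : ℂ := -(n : ℂ) * E + ((n : ℂ) + lam) * ((lam : ℂ) + 1)

lemma master (E : ℂ) (s : ℝ) (n : ℕ) (hs : s^2 = 1)
    (hE1 : E.re = -1/2) (hE2 : E.im = s * lam / 2) (z : ℂ) :
    normSq (gc0 E n * z + gd0 E n) - normSq (ga E n * z + gb E n)
      = 3*(2*lam-3)*(2*(n:ℝ)+1) * (z.re^2 + z.im^2)
        + 2*((-(3*lam*((n:ℝ)+2)))*z.re - (-(9*s*(n:ℝ)))*z.im)
        + 3*(2*lam+3)*(2*(n:ℝ)+1) := by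
  have hlam : lam^2 = 3 := lam_sq
  simp only [ga, gb, gc0, gd0, normSq_apply, add_re, add_im, mul_re, mul_im,
    sub_re, sub_im, neg_re, neg_im, natCast_re, natCast_im, ofReal_re, ofReal_im,
    one_re, one_im, hE1, hE2]
  linear_combination ((1/2)*lam^3*(n:ℝ) + (1/2)*lam^3*(n:ℝ)*z.im^2 + (-1)*lam^3*(n:ℝ)*z.re + (1/2)*lam^3*(n:ℝ)*z.re^2 + (-1/4)*lam^4 + (-1/4)*lam^4*z.im^2 + (1/2)*lam^4*z.re + (-1/4)*lam^4*z.re^2 + (-1)*lam^4*(n:ℝ)*z.im^2 + (1)*lam^4*(n:ℝ)*z.re + (-1)*lam^4*(n:ℝ)*z.re^2 + (1/2)*lam^5*z.im^2 + (-1/2)*lam^5*z.re + (1/2)*lam^5*z.re^2 + (1/2)*lam^5*(n:ℝ)*z.im^2 + (1/2)*lam^5*(n:ℝ)*z.re^2 + (-1/4)*lam^6*z.im^2 + (-1/4)*lam^6*z.re^2) * hs + ((3) + (-3)*z.im^2 + (-3)*z.re^2 + (6)*(n:ℝ) + (-6)*(n:ℝ)*z.im^2 + (-6)*(n:ℝ)*z.re^2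 + (6)*s*(n:ℝ)*z.im + (2)*lam + (2)*lam*z.im^2 + (-4)*lam*z.re + (2)*lam*z.re^2 + (5/2)*lam*(n:ℝ) + (5/2)*lam*(n:ℝ)*z.im^2 + (1)*lam*(n:ℝ)*z.re + (5/2)*lam*(n:ℝ)*z.re^2 + (3/4)*lam^2 + (-5/4)*lam^2*z.im^2 + (1/2)*lam^2*z.re + (-5/4)*lam^2*z.re^2 + (-1)*lam^2*(n:ℝ)*z.im^2 + (1)*lam^2*(n:ℝ)*z.re + (-1)*lam^2*(n:ℝ)*z.re^2 + (2)*lam^2*s*(n:ℝ)*z.im + (1/2)*lam^3*z.im^2 + (-1/2)*lam^3*z.re + (1/2)*lam^3*z.re^2 + (1/2)*lam^3*(n:ℝ)*z.im^2 + (1/2)*lam^3*(n:ℝ)*z.re^2 + (-1/4)*lam^4*z.im^2 + (-1/4)*lam^4*z.re^2) * hlam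

lemma cs_aux (a b x y V σ : ℝ) (hV0 : 0 ≤ V) (hσ0 : 0 ≤ σ)
    (hV2 : V^2 = a^2+b^2) (hσ2 : σ^2 = x^2+y^2) : -(V*σ) ≤ a*x + b*y := by
  have ht2 : (a*x+b*y)^2 ≤ V^2*σ^2 := by nlinarith [sq_nonneg (a*y - b*x)]
  nlinarith [ht2, mul_nonneg hV0 hσ0, sq_nonneg (a*x+b*y + V*σ)]

lemma hsq_aux (l ν : ℝ) (hl2 : l^2 = 3) (hub : l ≤ 1.7321) (hν : 3 ≤ ν) :
    (2*(57/20))^2*(108*(ν^2+ν+1))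
      ≤ (3*(2*l-3)*(2*ν+1)*(57/20)^2 + 3*(2*l+3)*(2*ν+1) - 1)^2 := by
  have key : (3*(2*l-3)*(2*ν+1)*(57/20)^2 + 3*(2*l+3)*(2*ν+1) - 1)^2
      = (2116175389/160000) + (2105758989/40000)*ν + (2095502589/40000)*ν^2
        + (-285070827/40000)*l + (-282881427/10000)*l*ν + (-280692027/10000)*l*ν^2 := by
    linear_combination ((119836809/40000) + (119836809/10000)*ν + (119836809/10000)*ν^2) * hl2
  rw [key]
  have h1 : (0:ℝ) ≤ 17321/10000 - l := by linarith
  have h2 : (0:ℝ) ≤ 285070827/40000 + 282881427/10000*ν + 280692027/10000*ν^2 := by nlinarith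
  nlinarith [mul_nonneg h1 h2, sq_nonneg (ν-3), hν, mul_nonneg (by linarith : (0:ℝ) ≤ ν-3) (by linarith : (0:ℝ) ≤ ν-3)]

lemma huR2_aux (l ν : ℝ) (hl2 : l^2 = 3) (hlb : 1.732 ≤ l) (hν : 3 ≤ ν) :
    (3*(2*l-3)*(2*ν+1)*(57/20))^2 ≤ 108*(ν^2+ν+1) := by
  have key : (3*(2*l-3)*(2*ν+1)*(57/20))^2 = (29241/400)*((21-12*l)*(2*ν+1)^2) := by
    linear_combination ((29241/100)*(2*ν+1)^2) * hl2
  rw [key]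
  have h1 : (0:ℝ) ≤ l - 1732/1000 := by linarith
  have h2 : (0:ℝ) ≤ (2*ν+1)^2 := sq_nonneg _
  nlinarith [mul_nonneg h1 h2, sq_nonneg (ν-3), hν]

lemma gen_bound (E : ℂ) (s : ℝ) (n : ℕ) (hs : s^2 = 1)
    (hE1 : E.re = -1/2) (hE2 : E.im = s * lam / 2) (hn : 3 ≤ n) (z : ℂ)
    (hz : ‖z‖ ≤ 57/20) :
    normSq (ga E n * z + gb E n) + 1 ≤ normSq (gc0 E n * z + gd0 E n) := by
  have hν : (3:ℝ) ≤ (n:ℝ) := by exact_mod_cast hn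
  have hlam : lam^2 = 3 := lam_sq
  have hlb := lam_lb
  have hub := lam_ub
  have hxy : z.re^2 + z.im^2 ≤ (57/20)^2 := by
    have h1 : normSq z ≤ (57/20)^2 := by
      rw [← Complex.sq_norm]
      exact pow_le_pow_left₀ (norm_nonneg z) hz 2
    rw [normSq_apply] at h1; nlinarith [h1]
  set ν := (n:ℝ) with hνdef
  set V := Real.sqrt (108*(ν^2+ν+1)) with hVdef
  have hV0 : 0 ≤ V := Real.sqrt_nonneg _
  have hV2 : V^2 = 108*(ν^2+ν+1) := Real.sq_sqrt (by positivity)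
  set σ := Real.sqrt (z.re^2+z.im^2) with hσdef
  have hσ0 : 0 ≤ σ := Real.sqrt_nonneg _
  have hσ2 : σ^2 = z.re^2+z.im^2 := Real.sq_sqrt (by positivity)
  have hσR : σ ≤ 57/20 := by
    rw [hσdef]
    calc Real.sqrt (z.re^2+z.im^2) ≤ Real.sqrt ((57/20)^2) := Real.sqrt_le_sqrt hxy
      _ = 57/20 := Real.sqrt_sq (by norm_num)
  have hCS : -(V*σ) ≤ (-(3*lam*(ν+2)))*z.re + (9*s*ν)*z.im := by
    refine cs_aux _ _ _ _ _ _ hV0 hσ0 ?_ hσ2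
    rw [hV2]; linear_combination -(9*(ν+2)^2)*hlam - (81*ν^2)*hs
  have hu0 : 0 ≤ 3*(2*lam-3)*(2*ν+1) := by nlinarith
  have huR2 : (3*(2*lam-3)*(2*ν+1)*(57/20))^2 ≤ V^2 := by
    rw [hV2]; exact huR2_aux lam ν hlam hlb hν
  have huR : 3*(2*lam-3)*(2*ν+1)*(57/20) ≤ V := by
    have h0 : 3*(2*lam-3)*(2*ν+1)*(57/20) = Real.sqrt ((3*(2*lam-3)*(2*ν+1)*(57/20))^2) :=
      (Real.sqrt_sq (by positivity)).symm
    rw [h0, hVdef, ← hV2]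
    exact Real.sqrt_le_sqrt huR2
  have hQ : 2*(57/20)*V ≤ 3*(2*lam-3)*(2*ν+1)*(57/20)^2 + 3*(2*lam+3)*(2*ν+1) - 1 := by
    have hrhs0 : (0:ℝ) ≤ 3*(2*lam-3)*(2*ν+1)*(57/20)^2 + 3*(2*lam+3)*(2*ν+1) - 1 := by
      nlinarith
    have hsq : (2*(57/20))^2*V^2
        ≤ (3*(2*lam-3)*(2*ν+1)*(57/20)^2 + 3*(2*lam+3)*(2*ν+1) - 1)^2 := by
      rw [hV2]; exact hsq_aux lam ν hlam hub hν
    have h0 : 2*(57/20)*V = Real.sqrt ((2*(57/20))^2*V^2) := by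
      rw [← mul_pow]; exact (Real.sqrt_sq (by positivity)).symm
    rw [h0]
    calc Real.sqrt ((2*(57/20))^2*V^2)
        ≤ Real.sqrt ((3*(2*lam-3)*(2*ν+1)*(57/20)^2 + 3*(2*lam+3)*(2*ν+1) - 1)^2) :=
          Real.sqrt_le_sqrt hsq
      _ = _ := Real.sqrt_sq hrhs0
  have hf2 : 0 ≤ 2*V - 3*(2*lam-3)*(2*ν+1)*(57/20+σ) := by
    have hp := mul_nonneg hu0 (show (0:ℝ) ≤ 57/20 - σ by linarith)
    linarith [huR, hp]
  have hf3 : 0 ≤ (57/20 - σ) * (2*V - 3*(2*lam-3)*(2*ν+1)*(57/20+σ)) :=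
    mul_nonneg (by linarith) hf2
  have h1 : 1 ≤ 3*(2*lam-3)*(2*ν+1)*σ^2 - 2*V*σ + 3*(2*lam+3)*(2*ν+1) := by
    linarith [hf3, hQ]
  have hmain := master E s n hs hE1 hE2 z
  rw [← hσ2] at hmain
  linarith [hmain, hCS, h1]

lemma cos23 : Real.cos (2 * Real.pi / 3) = -(1/2) := by
  have h : 2 * Real.pi / 3 = Real.pi - Real.pi / 3 := by ring
  rw [h, Real.cos_pi_sub, Real.cos_pi_div_three]

lemma sin23 : Real.sin (2 * Real.pi / 3) = lam / 2 := by
  have h : 2 * Real.pi / 3 = Real.pi - Real.pi / 3 := by ring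
  rw [h, Real.sin_pi_sub, Real.sin_pi_div_three]; rfl

lemma expA (k : ℕ) : ∃ s : ℝ, s^2 = 1 ∧
    (Complex.exp ((thetaA k : ℂ) * Complex.I)).re = -1/2 ∧
    (Complex.exp ((thetaA k : ℂ) * Complex.I)).im = s * lam / 2 := by
  rcases Nat.even_or_odd k with h | h
  · refine ⟨1, by norm_num, ?_, ?_⟩
    · rw [Complex.exp_ofReal_mul_I_re, thetaA, h.neg_one_pow, one_mul, cos23]; norm_num
    · rw [Complex.exp_ofReal_mul_I_im, thetaA, h.neg_one_pow, one_mul, sin23, one_mul]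
  · refine ⟨-1, by norm_num, ?_, ?_⟩
    · rw [Complex.exp_ofReal_mul_I_re, thetaA, h.neg_one_pow,
        show (-1:ℝ)*(2*Real.pi/3) = -(2*Real.pi/3) by ring, Real.cos_neg, cos23]; norm_num
    · rw [Complex.exp_ofReal_mul_I_im, thetaA, h.neg_one_pow,
        show (-1:ℝ)*(2*Real.pi/3) = -(2*Real.pi/3) by ring, Real.sin_neg, sin23]; ring

lemma gen_eq (k n : ℕ) (z : ℂ) (hz : ‖z‖ ≤ 21/20) :
    phi k n z
      = mob (Complex.exp ((thetaB k : ℂ) * Complex.I) * ga (Complex.exp ((thetaA k : ℂ) * Complex.I)) n)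
          (Complex.exp ((thetaB k : ℂ) * Complex.I) * gb (Complex.exp ((thetaA k : ℂ) * Complex.I)) n)
          (gc0 (Complex.exp ((thetaA k : ℂ) * Complex.I)) n)
          (gd0 (Complex.exp ((thetaA k : ℂ) * Complex.I)) n) z := by
  obtain ⟨s, hs, hE1, hE2⟩ := expA k
  have hlb := lam_lb
  have hub := lam_ub
  have hlam := lam_sq
  have hxy : z.re^2 + z.im^2 ≤ (21/20)^2 := by
    have h1 : normSq z ≤ (21/20)^2 := by
      rw [← Complex.sq_norm]
      exact pow_le_pow_left₀ (norm_nonneg z) hz 2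
    rw [normSq_apply] at h1; nlinarith [h1]
  set E : ℂ := Complex.exp ((thetaA k : ℂ) * Complex.I) with hE
  set E' : ℂ := Complex.exp ((thetaB k : ℂ) * Complex.I) with hE'
  set N : ℂ := ((lam : ℂ) - 1) * z + 1 with hN
  set Dz : ℂ := -z + (lam : ℂ) + 1 with hDz
  have hDne : Dz ≠ 0 := by
    intro h0
    have h1 : Dz.re = 0 := by rw [h0]; rfl
    rw [hDz] at h1
    simp only [add_re, neg_re, ofReal_re, one_re] at h1
    nlinarith [hxy, hlb, sq_nonneg z.im]
  have hq : 0 < normSq Dz := normSq_pos.mpr hDne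
  set w : ℂ := E * (N / Dz) with hw
  have hphi : phi k n z = E' * (apolF^[n] w) := rfl
  clear_value E E' N Dz w
  have hwre : w.re < 1 := by
    rw [hw, ← mul_div_assoc, Complex.div_re, ← add_div, div_lt_one hq]
    rcases mul_eq_zero.mp (show (s-1)*(s+1) = 0 by linear_combination hs) with h1 | h1
    · have hs1 : s = 1 := by linarith
      subst hs1
      simp only [normSq_apply, hN, hDz, mul_re, mul_im, add_re, add_im, sub_re, sub_im,
        neg_re, neg_im, ofReal_re, ofReal_im, one_re, one_im, hE1, hE2]
      have hl3 : lam^3 = 3*lam := by linear_combination lam * hlam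
      nlinarith [hlam, hl3, hlb, sq_nonneg (z.re - (9/16 + 3*lam/4)), sq_nonneg (z.im + 9*lam/16),
        mul_nonneg (show (0:ℝ) ≤ (3*lam-1)/6 by linarith)
          (show (0:ℝ) ≤ (21/20)^2 - (z.re^2+z.im^2) by linarith)]
    · have hs1 : s = -1 := by linarith
      subst hs1
      simp only [normSq_apply, hN, hDz, mul_re, mul_im, add_re, add_im, sub_re, sub_im,
        neg_re, neg_im, ofReal_re, ofReal_im, one_re, one_im, hE1, hE2]
      have hl3 : lam^3 = 3*lam := by linear_combination lam * hlam
      nlinarith [hlam, hl3, hlb, sq_nonneg (z.re - (9/16 + 3*lam/4)), sq_nonneg (z.im - 9*lam/16),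
        mul_nonneg (show (0:ℝ) ≤ (3*lam-1)/6 by linarith)
          (show (0:ℝ) ≤ (21/20)^2 - (z.re^2+z.im^2) by linarith)]
  have hmle : ∀ m : ℕ, (m : ℂ) * (1 - w) + (lam : ℂ) ≠ 0 := by
    intro m h0
    have h1 : (((m : ℂ) * (1 - w) + (lam : ℂ))).re = 0 := by rw [h0]; rfl
    simp only [add_re, mul_re, natCast_re, natCast_im, sub_re, sub_im, one_re, one_im,
      ofReal_re, zero_mul, sub_zero] at h1
    have hm0 : (0:ℝ) ≤ (m:ℝ) := Nat.cast_nonneg m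
    nlinarith [mul_nonneg hm0 (show (0:ℝ) ≤ 1 - w.re by linarith), hlb]
  rw [hphi, apolF_iter n w hmle]
  have hwDz : w * (-z + (lam : ℂ) + 1) = E * (((lam : ℂ) - 1) * z + 1) := by
    rw [← hN, ← hDz, hw]; field_simp
  have hnum : ga E n * z + gb E n = (((lam : ℂ) - n) * w + n) * Dz := by
    simp only [ga, gb]
    rw [hDz]
    linear_combination (-((lam:ℂ) - n)) * hwDz
  have hden : gc0 E n * z + gd0 E n = ((n : ℂ) * (1 - w) + (lam : ℂ)) * Dz := by
    simp only [gc0, gd0]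
    rw [hDz]
    linear_combination (n:ℂ) * hwDz
  have hkey : (((lam : ℂ) - n) * w + n) / ((n : ℂ) * (1 - w) + (lam : ℂ))
      = (ga E n * z + gb E n) / (gc0 E n * z + gd0 E n) := by
    rw [hnum, hden, mul_div_mul_right _ _ hDne]
  rw [hkey, mob,
    show E' * ga E n * z + E' * gb E n = E' * (ga E n * z + gb E n) from by ring,
    mul_div_assoc]

lemma normSq_expB (k : ℕ) : normSq (Complex.exp ((thetaB k : ℂ) * Complex.I)) = 1 := by
  rw [Complex.normSq_eq_norm_sq, Complex.norm_exp_ofReal_mul_I]; norm_num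

lemma gen_full (k n : ℕ) (hn : 3 ≤ n) :
    ∃ A B C D : ℂ,
      (∀ z : ℂ, ‖z‖ ≤ 57/20 → normSq (A*z+B) + 1 ≤ normSq (C*z+D)) ∧
      (∀ z : ℂ, ‖z‖ ≤ 21/20 → phi k n z = mob A B C D z) := by
  obtain ⟨s, hs, hE1, hE2⟩ := expA k
  refine ⟨_, _, _, _, ?_, fun z hz => gen_eq k n z hz⟩
  intro z hz
  have h := gen_bound (Complex.exp ((thetaA k : ℂ) * Complex.I)) s n hs hE1 hE2 hn z hz
  have he : Complex.exp ((thetaB k : ℂ) * Complex.I) * ga (Complex.exp ((thetaA k : ℂ) * Complex.I)) n * z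
        + Complex.exp ((thetaB k : ℂ) * Complex.I) * gb (Complex.exp ((thetaA k : ℂ) * Complex.I)) n
      = Complex.exp ((thetaB k : ℂ) * Complex.I)
        * (ga (Complex.exp ((thetaA k : ℂ) * Complex.I)) n * z
            + gb (Complex.exp ((thetaA k : ℂ) * Complex.I)) n) := by ring
  rw [he, Complex.normSq_mul, normSq_expB, one_mul]
  exact h

lemma mob_ineq_props {A B C D : ℂ} (z : ℂ) (h : normSq (A*z+B) + 1 ≤ normSq (C*z+D)) :
    C*z+D ≠ 0 ∧ ‖mob A B C D z‖ ≤ 1 := by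
  have h0 : 0 < normSq (C*z+D) := by have := normSq_nonneg (A*z+B); linarith
  have hne : C*z+D ≠ 0 := by
    intro hh; rw [hh, normSq_zero] at h0; exact lt_irrefl _ h0
  refine ⟨hne, ?_⟩
  rw [mob, norm_div, div_le_one (norm_pos_iff.mpr hne)]
  have h2 : normSq (A*z+B) ≤ normSq (C*z+D) := by linarith
  calc ‖A*z+B‖ = Real.sqrt (normSq (A*z+B)) := Complex.norm_def _
    _ ≤ Real.sqrt (normSq (C*z+D)) := Real.sqrt_le_sqrt h2
    _ = ‖C*z+D‖ := (Complex.norm_def _).symm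

lemma word_rep (ω : List (ℕ×ℕ)) (p : ℕ×ℕ) (hp : ∀ q ∈ p :: ω, 2 < q.2) :
    ∃ A B C D : ℂ,
      (∀ z : ℂ, ‖z‖ ≤ 57/20 → normSq (A*z+B) + 1 ≤ normSq (C*z+D)) ∧
      (∀ z : ℂ, ‖z‖ ≤ 21/20 → wordComp (p :: ω) z = mob A B C D z) := by
  induction ω generalizing p with
  | nil =>
      obtain ⟨A,B,C,D,h1,h2⟩ := gen_full p.1 p.2 (by have := hp p (by simp); omega)
      exact ⟨A,B,C,D,h1, fun z hz => by
        have : wordComp [p] z = phi p.1 p.2 z := rfl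
        rw [this]; exact h2 z hz⟩
  | cons q ω ih =>
      obtain ⟨A2,B2,C2,D2,h21,h22⟩ := ih q (fun r hr => hp r (by
        simp only [List.mem_cons] at hr ⊢; tauto))
      obtain ⟨A1,B1,C1,D1,h11,h12⟩ := gen_full p.1 p.2 (by have := hp p (by simp); omega)
      refine ⟨A1*A2+B1*C2, A1*B2+B1*D2, C1*A2+D1*C2, C1*B2+D1*D2, ?_, ?_⟩
      · intro z hz
        have h2 := h21 z hz
        obtain ⟨hden2, habs2⟩ := mob_ineq_props z h2
        have hw1 : ‖mob A2 B2 C2 D2 z‖ ≤ 57/20 := le_trans habs2 (by norm_num)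
        have h1 := h11 (mob A2 B2 C2 D2 z) hw1
        have hwmul : mob A2 B2 C2 D2 z * (C2*z+D2) = A2*z+B2 := by
          rw [mob]; exact div_mul_cancel₀ _ hden2
        have keyN : (A1*A2+B1*C2)*z + (A1*B2+B1*D2)
            = (A1 * mob A2 B2 C2 D2 z + B1)*(C2*z+D2) := by
          linear_combination (-A1) * hwmul
        have keyD : (C1*A2+D1*C2)*z + (C1*B2+D1*D2)
            = (C1 * mob A2 B2 C2 D2 z + D1)*(C2*z+D2) := by
          linear_combination (-C1) * hwmul
        rw [keyN, keyD, Complex.normSq_mul, Complex.normSq_mul]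
        have hd2 : 1 ≤ normSq (C2*z+D2) := by have := normSq_nonneg (A2*z+B2); linarith
        nlinarith [h1, hd2, normSq_nonneg (A1 * mob A2 B2 C2 D2 z + B1),
          normSq_nonneg (C2*z+D2)]
      · intro z hz
        have h2 := h21 z (le_trans hz (by norm_num))
        obtain ⟨hden2, habs2⟩ := mob_ineq_props z h2
        have hw1 : ‖mob A2 B2 C2 D2 z‖ ≤ 21/20 := le_trans habs2 (by norm_num)
        have hwmul : mob A2 B2 C2 D2 z * (C2*z+D2) = A2*z+B2 := by
          rw [mob]; exact div_mul_cancel₀ _ hden2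
        have keyN : (A1*A2+B1*C2)*z + (A1*B2+B1*D2)
            = (A1 * mob A2 B2 C2 D2 z + B1)*(C2*z+D2) := by
          linear_combination (-A1) * hwmul
        have keyD : (C1*A2+D1*C2)*z + (C1*B2+D1*D2)
            = (C1 * mob A2 B2 C2 D2 z + D1)*(C2*z+D2) := by
          linear_combination (-C1) * hwmul
        have hcomp : wordComp (p::q::ω) z = phi p.1 p.2 (wordComp (q::ω) z) := rfl
        rw [hcomp, h22 z hz, h12 (mob A2 B2 C2 D2 z) hw1, mob]
        conv_rhs => rw [mob]
        rw [keyN, keyD, mul_div_mul_right _ _ hden2]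

lemma mob_hasDeriv {A B C D : ℂ} (z : ℂ) (h : C*z+D ≠ 0) :
    HasDerivAt (mob A B C D) ((A*D - B*C)/(C*z+D)^2) z := by
  have h1 : HasDerivAt (fun ζ : ℂ => A*ζ+B) A z := by
    simpa using ((hasDerivAt_id z).const_mul A).add_const B
  have h2 : HasDerivAt (fun ζ : ℂ => C*ζ+D) C z := by
    simpa using ((hasDerivAt_id z).const_mul C).add_const D
  have h3 := h1.div h2 h
  have h4 : (A*(C*z+D) - (A*z+B)*C)/(C*z+D)^2 = (A*D - B*C)/(C*z+D)^2 := by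
    congr 1; ring
  rw [h4] at h3
  exact h3

lemma apollonian_aux (ω : List (ℕ × ℕ))
    (hω : ∀ p ∈ ω, p ∈ apolI ∧ 2 < p.2)
    (z w : ℂ) (hz : z ∈ unitD) (hw : w ∈ unitD) :
    ‖deriv (wordComp ω) z‖ ≤ 4.3655 * ‖deriv (wordComp ω) w‖ := by
  have hz1 : ‖z‖ ≤ 1 := by
    simpa [unitD, Complex.dist_eq] using hz
  have hw1 : ‖w‖ ≤ 1 := by
    simpa [unitD, Complex.dist_eq] using hw
  cases ω with
  | nil =>
      have hid : wordComp [] = id := rfl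
      rw [hid, deriv_id, deriv_id]
      norm_num
  | cons p ω' =>
      have hp : ∀ q ∈ p :: ω', 2 < q.2 := fun q hq => (hω q hq).2
      obtain ⟨A, B, C, D, H1, H2⟩ := word_rep ω' p hp
      have hev : ∀ u : ℂ, ‖u‖ ≤ 1 →
          deriv (wordComp (p :: ω')) u = (A*D - B*C)/(C*u+D)^2 := by
        intro u hu
        have hmem : Metric.ball (0:ℂ) (21/20) ∈ nhds u :=
          Metric.isOpen_ball.mem_nhds (by
            simp only [Metric.mem_ball, Complex.dist_eq, sub_zero]; linarith)
        have heq : wordComp (p :: ω') =ᶠ[nhds u] mob A B C D :=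
          Filter.eventuallyEq_of_mem hmem (fun v hv => H2 v (le_of_lt (by
            simpa [Metric.mem_ball, Complex.dist_eq, sub_zero] using hv)))
        rw [heq.deriv_eq]
        have hden := (mob_ineq_props u (H1 u (by linarith))).1
        exact (mob_hasDeriv u hden).deriv
      rw [hev z hz1, hev w hw1]
      have hdz := (mob_ineq_props z (H1 z (by linarith))).1
      have hdw := (mob_ineq_props w (H1 w (by linarith))).1
      have key : ‖C*w+D‖ ≤ (77/37) * ‖C*z+D‖ := by
        by_cases hC : C = 0
        · rw [hC]
          simp only [zero_mul, zero_add]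
          nlinarith [norm_nonneg D]
        · have hpole : (57:ℝ)/20 < ‖-D/C‖ := by
            by_contra hcon
            push_neg at hcon
            apply (mob_ineq_props (-D/C) (H1 (-D/C) hcon)).1
            field_simp
            ring
          have hzp : C*z+D = C*(z - (-D/C)) := by field_simp; ring
          have hwp : C*w+D = C*(w - (-D/C)) := by field_simp; ring
          rw [hzp, hwp, norm_mul, norm_mul]
          have h1 : ‖w - (-D/C)‖ ≤ 1 + ‖-D/C‖ := by
            calc ‖w - (-D/C)‖ ≤ ‖w‖ + ‖-D/C‖ := by
                  simpa [sub_eq_add_neg] using norm_add_le w (-(-D/C))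
              _ ≤ 1 + ‖-D/C‖ := by linarith
          have h2 : ‖-D/C‖ - 1 ≤ ‖z - (-D/C)‖ := by
            have h3 : ‖-D/C‖ - ‖z‖ ≤ ‖-D/C - z‖ :=
              norm_sub_norm_le _ _
            have h4 : ‖-D/C - z‖ = ‖z - (-D/C)‖ :=
              norm_sub_rev _ _
            linarith
          nlinarith [norm_nonneg C, h1, h2, hpole,
            mul_nonneg (norm_nonneg C) (norm_nonneg (z - (-D/C)))]
      rw [norm_div, norm_div, norm_pow, norm_pow]
      have hza : 0 < ‖C*z+D‖ := norm_pos_iff.mpr hdz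
      have hwa : 0 < ‖C*w+D‖ := norm_pos_iff.mpr hdw
      have key2 : ‖C*w+D‖^2 ≤ (77/37)^2 * ‖C*z+D‖^2 := by
        nlinarith [key, norm_nonneg (C*w+D), norm_nonneg (C*z+D)]
      rw [show (4.3655:ℝ) * (‖A*D-B*C‖ / ‖C*w+D‖^2)
            = (4.3655 * ‖A*D-B*C‖) / ‖C*w+D‖^2 from
          (mul_div_assoc _ _ _).symm,
        div_le_div_iff₀ (pow_pos hza 2) (pow_pos hwa 2)]
      nlinarith [key2, norm_nonneg (A*D-B*C), pow_pos hza 2,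
        mul_nonneg (norm_nonneg (A*D-B*C)) (sq_nonneg (‖C*z+D‖))]

/-- For every finite word ω over I restricted to n > 2 and z, w ∈ 𝔻,
|φ'_ω(z)| ≤ 4.3655 · |φ'_ω(w)|. -/
theorem apollonian_distortion_bound_n_gt_two (ω : List (ℕ × ℕ))
    (hω : ∀ p ∈ ω, p ∈ apolI ∧ 2 < p.2)
    (z w : ℂ) (hz : z ∈ unitD) (hw : w ∈ unitD) :
    ‖deriv (wordComp ω) z‖ ≤ 4.3655 * ‖deriv (wordComp ω) w‖ := by
  exact apollonian_aux ω hω z w hz hw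

end
end

section
/- Let K ≥ 1, t > 1/2 and N a positive integer. If 6·(0.45)^t / ((2t−1)(N+1)^{2t−1}) ≥ K^{2t}·(3.821)^t / N^{2t}, then: (i) for every integer M ≥ N, 6·Σ_{n=M+1}^{∞} ‖φ'_n‖_∞^t ≥ K^{2t}·‖φ'_M‖_∞^t; and (ii) the same hypothesis inequality holds with t replaced by any s with 1/2 < s ≤ t. -/
open Complex Metric Set
open scoped ENNReal

noncomputable section

/-- ‖φ'_{k,n}‖_∞ = max over the closed unit disk of |φ'_{k,n}|. -/
def Dnorm (k n : ℕ) : ℝ := sSup ((fun z => ‖deriv (phi k n) z‖) '' unitD)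

namespace Apol
lemma lam_nonneg : (0:ℝ) ≤ lam := Real.sqrt_nonneg 3
lemma lam_sq : lam ^ 2 = 3 := Real.sq_sqrt (by norm_num)
lemma lam_gt : (1.7320508 : ℝ) < lam := by nlinarith [lam_sq, lam_nonneg]
lemma lam_lt : lam < (1.7320509 : ℝ) := by nlinarith [lam_sq, lam_nonneg]
lemma lamC_sq : ((lam : ℝ) : ℂ) ^ 2 = 3 := by
  rw [← Complex.ofReal_pow, lam_sq]; norm_num
lemma lamC_ne : ((lam : ℝ) : ℂ) ≠ 0 := by
  simp only [ne_eq, Complex.ofReal_eq_zero]; nlinarith [lam_gt]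

lemma den_ne (z : ℂ) (hz : ‖z‖ ≤ 1) : (-z + (lam:ℂ) + 1) ≠ 0 := by
  intro h
  have h2 : (lam:ℂ) + 1 = z := by linear_combination h
  have h1 : ‖(lam:ℂ) + 1‖ = lam + 1 := by
    rw [show ((lam:ℂ) + 1) = ((lam + 1 : ℝ) : ℂ) by push_cast; ring, Complex.norm_real, Real.norm_eq_abs,
      _root_.abs_of_nonneg (by nlinarith [lam_gt])]
  rw [h2] at h1
  nlinarith [lam_gt]

lemma abs_apolF_le (z : ℂ) (hz : ‖z‖ ≤ 1) : ‖apolF z‖ ≤ 1 := by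
  have hden := den_ne z hz
  rw [apolF, norm_div, div_le_one (norm_pos_iff.mpr hden)]
  have hx : z.re ^ 2 + z.im ^ 2 ≤ 1 := by
    have := Complex.sq_norm z
    rw [Complex.normSq_apply] at this
    nlinarith [hz, norm_nonneg z]
  have hx2 : z.re ^ 2 ≤ 1 := by nlinarith [sq_nonneg z.im]
  have hx1 : z.re ≤ 1 := by nlinarith
  have hxm : -1 ≤ z.re := by nlinarith
  have h2l : (0:ℝ) ≤ 2 * lam - 3 := by nlinarith [lam_gt]
  have hsq : Complex.normSq (((lam:ℂ) - 1) * z + 1) ≤ Complex.normSq (-z + (lam:ℂ) + 1) := by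
    simp only [Complex.normSq_apply, Complex.add_re, Complex.add_im, Complex.mul_re,
      Complex.mul_im, Complex.sub_re, Complex.sub_im, Complex.neg_re, Complex.neg_im,
      Complex.ofReal_re, Complex.ofReal_im, Complex.one_re, Complex.one_im]
    nlinarith [lam_sq, mul_nonneg (sub_nonneg.2 hx1)
        (show (0:ℝ) ≤ 2*lam + 3 - (2*lam - 3) * z.re by nlinarith),
      mul_nonneg h2l (sq_nonneg z.im)]
  calc ‖((lam:ℂ) - 1) * z + 1‖ = Real.sqrt (Complex.normSq (((lam:ℂ) - 1) * z + 1)) :=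
        Complex.norm_def _
    _ ≤ Real.sqrt (Complex.normSq (-z + (lam:ℂ) + 1)) := Real.sqrt_le_sqrt hsq
    _ = ‖-z + (lam:ℂ) + 1‖ := (Complex.norm_def _).symm


lemma denom_ne (m : ℕ) (z : ℂ) (hz : ‖z‖ < 1 + lam/(m+1)) :
    (-(m:ℂ)*z + (lam:ℂ) + m) ≠ 0 := by
  intro h
  have h2 : ((lam:ℝ):ℂ) + m = (m:ℂ) * z := by linear_combination h
  have h3 : lam + m = m * ‖z‖ := by
    have := congrArg (‖·‖) h2
    rwa [show ((lam:ℝ):ℂ) + m = (((lam + m : ℝ)) : ℂ) by push_cast; ring, Complex.norm_real, Real.norm_eq_abs,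
      norm_mul, Complex.norm_natCast, _root_.abs_of_nonneg (add_nonneg lam_nonneg (Nat.cast_nonneg m))] at this
  have hm : (0:ℝ) ≤ (m:ℝ) := Nat.cast_nonneg m
  have : (m:ℝ) * ‖z‖ < m * (1 + lam/(m+1)) ∨ m = 0 := by
    rcases Nat.eq_zero_or_pos m with h0 | h0
    · right; exact h0
    · left
      exact mul_lt_mul_of_pos_left hz (by exact_mod_cast h0)
  rcases this with h4 | h4
  · have h5 : (m:ℝ) * (lam/(m+1)) ≤ lam := by
      rw [mul_div_assoc']
      rw [div_le_iff₀ (by positivity)]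
      nlinarith [lam_gt]
    nlinarith
  · subst h4
    simp at h3
    nlinarith [lam_gt]

lemma iter_eq : ∀ (n : ℕ) (z : ℂ), ‖z‖ < 1 + lam/(n+1) →
    apolF^[n] z = (((lam:ℂ) - n) * z + n) / (-(n:ℂ) * z + (lam:ℂ) + n) := by
  intro n
  induction n with
  | zero =>
    intro z hz
    simp only [Function.iterate_zero, id_eq, Nat.cast_zero, neg_zero, zero_mul, sub_zero,
      add_zero, zero_add]
    rw [mul_comm, mul_div_assoc, div_self lamC_ne, mul_one]
  | succ n ih =>
    intro z hz
    have hmono : ‖z‖ < 1 + lam/(n+1) := by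
      have : lam/((n:ℝ)+1+1) ≤ lam/((n:ℝ)+1) := by
        apply div_le_div_of_nonneg_left lam_nonneg (by positivity) (by push_cast; linarith)
      push_cast at hz ⊢
      linarith
    have hd : (-(n:ℂ)*z + (lam:ℂ) + n) ≠ 0 := denom_ne n z hmono
    have hd2 : (-((n:ℂ)+1)*z + (lam:ℂ) + ((n:ℂ)+1)) ≠ 0 := by
      have := denom_ne (n+1) z (by push_cast at hz ⊢; convert hz using 3 <;> ring)
      push_cast at this
      convert this using 2 <;> ring
    have hd' : ((n:ℂ) - (n:ℂ)*z + (lam:ℂ)) ≠ 0 := by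
      intro h; exact hd (by linear_combination h)
    rw [Function.iterate_succ_apply', ih z hmono]
    rw [apolF]
    set D : ℂ := -(n:ℂ) * z + (lam:ℂ) + n with hD
    set Nn : ℂ := ((lam:ℂ) - n) * z + n with hNn
    have hw : Nn / D * D = Nn := div_mul_cancel₀ Nn hd
    have hne : -(Nn / D) + (lam:ℂ) + 1 ≠ 0 := by
      have hval : -(Nn / D) + (lam:ℂ) + 1
          = (lam:ℂ) * (-((n:ℂ)+1)*z + (lam:ℂ) + ((n:ℂ)+1)) / D := by
        rw [eq_div_iff hd]; linear_combination (-1 : ℂ) * hw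
      rw [hval]
      exact div_ne_zero (mul_ne_zero lamC_ne hd2) hd
    have hd2c : (-(((n:ℕ)+1 : ℕ):ℂ) * z + (lam:ℂ) + (((n:ℕ)+1 : ℕ):ℂ)) ≠ 0 := by
      intro h; apply hd2; push_cast at h; linear_combination h
    rw [div_eq_div_iff hne hd2c]
    push_cast
    linear_combination ((lam:ℝ):ℂ) * hw


lemma hasDerivAt_apolF (z : ℂ) (hz : ‖z‖ ≤ 1) :
    HasDerivAt apolF (3 / (-z + (lam:ℂ) + 1)^2) z := by
  have hu : HasDerivAt (fun w : ℂ => ((lam:ℂ) - 1) * w + 1) ((lam:ℂ) - 1) z := by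
    simpa using ((hasDerivAt_id z).const_mul ((lam:ℂ) - 1)).add_const 1
  have hv : HasDerivAt (fun w : ℂ => -w + (lam:ℂ) + 1) (-1) z := by
    simpa using (((hasDerivAt_id z).neg).add_const ((lam:ℂ))).add_const 1
  have h := hu.div hv (den_ne z hz)
  refine h.congr_deriv ?_; symm
  rw [div_eq_div_iff (pow_ne_zero 2 (den_ne z hz)) (pow_ne_zero 2 (den_ne z hz))]
  linear_combination (-(-z + (lam:ℂ) + 1)^2) * lamC_sq

lemma hasDerivAt_iter (n : ℕ) (u : ℂ) (hu : ‖u‖ ≤ 1) :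
    HasDerivAt (apolF^[n]) (3 / (-(n:ℂ)*u + (lam:ℂ) + n)^2) u := by
  have hlt : ‖u‖ < 1 + lam/(n+1) := by
    have : (0:ℝ) < lam / (n+1) := by
      apply div_pos (by nlinarith [lam_gt]) (by positivity)
    linarith
  have hdu : (-(n:ℂ)*u + (lam:ℂ) + n) ≠ 0 := denom_ne n u hlt
  have hnum : HasDerivAt (fun w : ℂ => ((lam:ℂ) - n) * w + n) ((lam:ℂ) - n) u := by
    simpa using ((hasDerivAt_id u).const_mul ((lam:ℂ) - n)).add_const (n:ℂ)
  have hden : HasDerivAt (fun w : ℂ => -(n:ℂ)*w + (lam:ℂ) + n) (-(n:ℂ)) u := by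
    simpa using (((hasDerivAt_id u).const_mul (-(n:ℂ))).add_const ((lam:ℂ))).add_const (n:ℂ)
  have hg : HasDerivAt (fun w : ℂ => (((lam:ℂ) - n) * w + n) / (-(n:ℂ)*w + (lam:ℂ) + n))
      (3 / (-(n:ℂ)*u + (lam:ℂ) + n)^2) u := by
    have h := hnum.div hden hdu
    refine h.congr_deriv ?_; symm
    rw [div_eq_div_iff (pow_ne_zero 2 hdu) (pow_ne_zero 2 hdu)]
    linear_combination (-(-(n:ℂ)*u + (lam:ℂ) + n)^2) * lamC_sq
  apply hg.congr_of_eventuallyEq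
  have hmem : Metric.ball (0:ℂ) (1 + lam/(n+1)) ∈ nhds u := by
    apply (Metric.isOpen_ball).mem_nhds
    simpa [Metric.mem_ball, Complex.dist_eq] using hlt
  filter_upwards [hmem] with w hw
  exact iter_eq n w (by simpa [Metric.mem_ball, Complex.dist_eq] using hw)

lemma hasDerivAt_phi (n : ℕ) (z : ℂ) (hz : ‖z‖ ≤ 1) :
    HasDerivAt (phi 1 n)
      (Complex.exp ((thetaB 1 : ℝ) * Complex.I) *
        (3 / (-(n:ℂ)*(Complex.exp ((thetaA 1 : ℝ) * Complex.I) * apolF z) + (lam:ℂ) + n)^2) *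
        (Complex.exp ((thetaA 1 : ℝ) * Complex.I) * (3 / (-z + (lam:ℂ) + 1)^2))) z := by
  set E : ℂ := Complex.exp ((thetaA 1 : ℝ) * Complex.I) with hE
  set E' : ℂ := Complex.exp ((thetaB 1 : ℝ) * Complex.I) with hE'
  set u : ℂ := E * apolF z with huDef
  have hu : ‖u‖ ≤ 1 := by
    rw [huDef, norm_mul, Complex.norm_exp_ofReal_mul_I, one_mul]
    exact abs_apolF_le z hz
  have h1 : HasDerivAt (fun w => E * apolF w) (E * (3 / (-z + (lam:ℂ) + 1)^2)) z :=
    (hasDerivAt_apolF z hz).const_mul E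
  have h2 : HasDerivAt (fun w => apolF^[n] (E * apolF w))
      ((3 / (-(n:ℂ)*u + (lam:ℂ) + n)^2) * (E * (3 / (-z + (lam:ℂ) + 1)^2))) z :=
    (hasDerivAt_iter n u hu).comp z h1
  have h3 := h2.const_mul E'
  have hphi : phi 1 n = fun w => E' * (apolF^[n] (E * apolF w)) := by
    funext w; simp [phi, Rot, Function.comp, hE, hE']
  rw [hphi]
  refine h3.congr_deriv ?_
  ring

lemma abs_deriv_phi (n : ℕ) (z : ℂ) (hz : ‖z‖ ≤ 1) :
    ‖deriv (phi 1 n) z‖ =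
      9 / (Complex.normSq (-(n:ℂ)*(Complex.exp ((thetaA 1 : ℝ) * Complex.I) * apolF z) + (lam:ℂ) + n)
        * Complex.normSq (-z + (lam:ℂ) + 1)) := by
  rw [(hasDerivAt_phi n z hz).deriv]
  rw [norm_mul, norm_mul, norm_mul, Complex.norm_exp_ofReal_mul_I, Complex.norm_exp_ofReal_mul_I,
    norm_div, norm_div, norm_pow, norm_pow]
  rw [← Complex.sq_norm, ← Complex.sq_norm]
  norm_num
  ring

lemma thetaA_one : thetaA 1 = -(2 * Real.pi / 3) := by simp [thetaA]

lemma E_re : (Complex.exp ((thetaA 1 : ℝ) * Complex.I)).re = -(1/2) := by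
  rw [Complex.exp_ofReal_mul_I_re, thetaA_one, Real.cos_neg,
    show (2 * Real.pi / 3 : ℝ) = Real.pi - Real.pi/3 by ring, Real.cos_pi_sub,
    Real.cos_pi_div_three]

lemma E_im : (Complex.exp ((thetaA 1 : ℝ) * Complex.I)).im = -(lam/2) := by
  rw [Complex.exp_ofReal_mul_I_im, thetaA_one, Real.sin_neg,
    show (2 * Real.pi / 3 : ℝ) = Real.pi - Real.pi/3 by ring, Real.sin_pi_sub,
    Real.sin_pi_div_three]
  rfl

lemma key_lower (n : ℕ) (z : ℂ) (hz : ‖z‖ ≤ 1) :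
    6 * (n:ℝ)^2 ≤
      Complex.normSq (-(n:ℂ)*(Complex.exp ((thetaA 1 : ℝ) * Complex.I) * apolF z) + (lam:ℂ) + n)
        * Complex.normSq (-z + (lam:ℂ) + 1) := by
  set E : ℂ := Complex.exp ((thetaA 1 : ℝ) * Complex.I) with hE
  set u : ℂ := E * apolF z with huDef
  have hu : ‖u‖ ≤ 1 := by
    rw [huDef, norm_mul, hE, Complex.norm_exp_ofReal_mul_I, one_mul]
    exact abs_apolF_le z hz
  have hp : u.re ≤ 1 := (Complex.re_le_norm u).trans hu
  -- step 1
  have step1 : (n:ℝ)^2 * Complex.normSq (1 - u) ≤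
      Complex.normSq (-(n:ℂ)*u + (lam:ℂ) + n) := by
    simp only [Complex.normSq_apply, Complex.add_re, Complex.add_im, Complex.mul_re,
      Complex.mul_im, Complex.sub_re, Complex.sub_im, Complex.neg_re, Complex.neg_im,
      Complex.ofReal_re, Complex.ofReal_im, Complex.one_re, Complex.one_im,
      Complex.natCast_re, Complex.natCast_im]
    have hn0 : (0:ℝ) ≤ (n:ℝ) := Nat.cast_nonneg n
    nlinarith [lam_sq, lam_gt, mul_nonneg (mul_nonneg lam_nonneg hn0) (sub_nonneg.2 hp)]
  -- step 2
  have hnum : apolF z * (-z + (lam:ℂ) + 1) = ((lam:ℂ)-1)*z + 1 :=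
    div_mul_cancel₀ _ (den_ne z hz)
  have hEre : E.re = -(1/2) := by rw [hE]; exact E_re
  have hEim : E.im = -(lam/2) := by rw [hE]; exact E_im
  set a : ℂ := -1 - E * ((lam:ℂ) - 1) with ha
  set b : ℂ := ((lam:ℂ) + 1) - E with hb
  have hW : (1 - u) * (-z + (lam:ℂ) + 1) = b + a * z := by
    rw [huDef, ha, hb]
    linear_combination (-E) * hnum
  have hna : Complex.normSq a = 6 - 3 * lam := by
    rw [ha]
    simp only [Complex.normSq_apply, Complex.sub_re, Complex.sub_im, Complex.mul_re,
      Complex.mul_im, Complex.neg_re, Complex.neg_im, Complex.one_re, Complex.one_im,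
      Complex.ofReal_re, Complex.ofReal_im, hEre, hEim]
    ring_nf
    linear_combination ((lam^2 - 2*lam + 5)/4) * lam_sq
  have hnb : Complex.normSq b = 6 + 3 * lam := by
    rw [hb]
    simp only [Complex.normSq_apply, Complex.sub_re, Complex.sub_im, Complex.add_re,
      Complex.add_im, Complex.one_re, Complex.one_im, Complex.ofReal_re, Complex.ofReal_im,
      hEre, hEim]
    ring_nf
    linear_combination (5/4) * lam_sq
  have h6a : (0:ℝ) ≤ 6 - 3 * lam := by nlinarith [lam_lt]
  have h6b : (0:ℝ) ≤ 6 + 3 * lam := by nlinarith [lam_gt]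
  have habsa : ‖a‖ = Real.sqrt (6 - 3*lam) := by
    rw [Complex.norm_def, hna]
  have habsb : ‖b‖ = Real.sqrt (6 + 3*lam) := by
    rw [Complex.norm_def, hnb]
  have hprod : Real.sqrt (6 - 3*lam) * Real.sqrt (6 + 3*lam) = 3 := by
    rw [← Real.sqrt_mul h6a, show (6 - 3*lam) * (6 + 3*lam) = 36 - 9 * lam^2 by ring, lam_sq,
      show (36 - 9*3 : ℝ) = 3^2 by norm_num, Real.sqrt_sq (by norm_num)]
  have hba : ‖a‖ ≤ ‖b‖ := by
    rw [habsa, habsb]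
    exact Real.sqrt_le_sqrt (by nlinarith [lam_gt])
  have htri : ‖b‖ - ‖a‖ ≤ ‖(1-u) * (-z + (lam:ℂ) + 1)‖ := by
    have h1 : ‖b‖ ≤ ‖b + a*z‖ + ‖a‖ := by
      calc ‖b‖ = ‖(b + a*z) + (-(a*z))‖ := by
            rw [add_neg_cancel_right]
        _ ≤ ‖b + a*z‖ + ‖-(a*z)‖ := norm_add_le _ _
        _ = ‖b + a*z‖ + ‖a‖ * ‖z‖ := by
            rw [norm_neg, norm_mul]
        _ ≤ ‖b + a*z‖ + ‖a‖ * 1 := by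
            gcongr
        _ = ‖b + a*z‖ + ‖a‖ := by ring
    rw [hW]
    linarith
  have step2 : (6:ℝ) ≤ Complex.normSq (1 - u) * Complex.normSq (-z + (lam:ℂ) + 1) := by
    rw [← Complex.normSq_mul]
    have hnn : 0 ≤ ‖b‖ - ‖a‖ := by linarith
    have hsq : (‖b‖ - ‖a‖)^2 ≤
        (‖(1-u) * (-z + (lam:ℂ) + 1)‖)^2 := by
      apply pow_le_pow_left₀ hnn htri
    rw [Complex.sq_norm] at hsq
    have : (‖b‖ - ‖a‖)^2 = 6 := by
      rw [habsa, habsb]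
      have e1 : Real.sqrt (6 + 3*lam) ^ 2 = 6 + 3*lam := Real.sq_sqrt h6b
      have e2 : Real.sqrt (6 - 3*lam) ^ 2 = 6 - 3*lam := Real.sq_sqrt h6a
      nlinarith [hprod]
    linarith
  calc 6 * (n:ℝ)^2 = (n:ℝ)^2 * 6 := by ring
    _ ≤ (n:ℝ)^2 * (Complex.normSq (1 - u) * Complex.normSq (-z + (lam:ℂ) + 1)) := by
        gcongr
    _ = ((n:ℝ)^2 * Complex.normSq (1 - u)) * Complex.normSq (-z + (lam:ℂ) + 1) := by ring
    _ ≤ _ := by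
        gcongr
        exact Complex.normSq_nonneg _

lemma abs_deriv_le (n : ℕ) (hn : 1 ≤ n) (z : ℂ) (hz : ‖z‖ ≤ 1) :
    ‖deriv (phi 1 n) z‖ ≤ 3 / (2 * (n:ℝ)^2) := by
  rw [abs_deriv_phi n z hz]
  have hn' : (0:ℝ) < (n:ℝ) := by exact_mod_cast hn
  have h6 : (0:ℝ) < 6 * (n:ℝ)^2 := by positivity
  have hk := key_lower n z hz
  calc (9:ℝ) / _ ≤ 9 / (6 * (n:ℝ)^2) := by
        apply div_le_div_of_nonneg_left (by norm_num) h6 hk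
    _ = 3 / (2 * (n:ℝ)^2) := by ring

lemma apolF_one : apolF 1 = 1 := by
  rw [apolF]
  simp only [mul_one]
  rw [show ((lam:ℂ) - 1) + 1 = (lam:ℂ) by ring, show -1 + (lam:ℂ) + 1 = (lam:ℂ) by ring,
    div_self lamC_ne]

lemma abs_deriv_at_one (n : ℕ) :
    ‖deriv (phi 1 n) 1‖ = 3 / (3*(n:ℝ)^2 + 3*lam*(n:ℝ) + 3) := by
  rw [abs_deriv_phi n 1 (by rw [norm_one])]
  rw [apolF_one, mul_one]
  have hA : Complex.normSq (-(n:ℂ) * Complex.exp ((thetaA 1 : ℝ) * Complex.I) + (lam:ℂ) + n)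
      = 3*(n:ℝ)^2 + 3*lam*(n:ℝ) + 3 := by
    simp only [Complex.normSq_apply, Complex.add_re, Complex.add_im, Complex.mul_re,
      Complex.mul_im, Complex.neg_re, Complex.neg_im, Complex.ofReal_re, Complex.ofReal_im,
      Complex.natCast_re, Complex.natCast_im, E_re, E_im]
    ring_nf
    linear_combination (1 + (n:ℝ)^2/4) * lam_sq
  have hB : Complex.normSq (-1 + (lam:ℂ) + 1) = 3 := by
    rw [show -1 + (lam:ℂ) + 1 = ((lam:ℝ):ℂ) by ring, Complex.normSq_ofReal, ← lam_sq]
    ring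
  rw [hA, hB]
  have hpos : (0:ℝ) < 3*(n:ℝ)^2 + 3*lam*(n:ℝ) + 3 := by
    have : (0:ℝ) ≤ (n:ℝ) := Nat.cast_nonneg n
    nlinarith [lam_gt, sq_nonneg (n:ℝ)]
  field_simp
  ring

lemma one_mem_unitD : (1:ℂ) ∈ unitD := by
  simp [unitD, Metric.mem_closedBall, Complex.dist_eq]

lemma Dnorm_le (n : ℕ) (hn : 1 ≤ n) : Dnorm 1 n ≤ 3 / (2 * (n:ℝ)^2) := by
  apply Real.sSup_le
  · rintro y ⟨z, hzmem, rfl⟩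
    have hz : ‖z‖ ≤ 1 := by
      simpa [unitD, Metric.mem_closedBall, Complex.dist_eq] using hzmem
    exact abs_deriv_le n hn z hz
  · positivity

lemma Dnorm_ge (n : ℕ) (hn : 1 ≤ n) :
    3 / (3*(n:ℝ)^2 + 3*lam*(n:ℝ) + 3) ≤ Dnorm 1 n := by
  rw [← abs_deriv_at_one n]
  apply le_csSup
  · refine ⟨3 / (2 * (n:ℝ)^2), ?_⟩
    rintro y ⟨z, hzmem, rfl⟩
    have hz : ‖z‖ ≤ 1 := by
      simpa [unitD, Metric.mem_closedBall, Complex.dist_eq] using hzmem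
    exact abs_deriv_le n hn z hz
  · exact ⟨1, one_mem_unitD, rfl⟩

lemma Dnorm_nonneg (n : ℕ) (hn : 1 ≤ n) : 0 ≤ Dnorm 1 n := by
  refine le_trans ?_ (Dnorm_ge n hn)
  have : (0:ℝ) ≤ (n:ℝ) := Nat.cast_nonneg n
  have hpos : (0:ℝ) < 3*(n:ℝ)^2 + 3*lam*(n:ℝ) + 3 := by
    nlinarith [lam_gt, sq_nonneg (n:ℝ)]
  positivity

lemma tele_ineq (p a : ℝ) (hp : 0 < p) (ha : 1 ≤ a) :
    a^(-p) - (a+1)^(-p) ≤ p * a^(-p-1) := by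
  have ha0 : (0:ℝ) < a := lt_of_lt_of_le one_pos ha
  have hcont : ContinuousOn (fun x : ℝ => x ^ (-p)) (Set.Icc a (a+1)) := by
    intro x hx
    have hx0 : x ≠ 0 := by
      have := hx.1; exact (by linarith : (0:ℝ) < x).ne'
    exact (Real.continuousAt_rpow_const x (-p) (Or.inl hx0)).continuousWithinAt
  have hderiv : ∀ x ∈ Set.Ioo a (a+1),
      HasDerivAt (fun x : ℝ => x ^ (-p)) ((-p) * x ^ (-p-1)) x := by
    intro x hx
    have hx0 : x ≠ 0 := by
      have := hx.1; exact (by linarith : (0:ℝ) < x).ne'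
    have := Real.hasDerivAt_rpow_const (x := x) (p := -p) (Or.inl hx0)
    simpa [sub_eq_add_neg, add_comm] using this
  obtain ⟨c, hc, hceq⟩ := exists_hasDerivAt_eq_slope (fun x : ℝ => x ^ (-p))
    (fun x => (-p) * x ^ (-p-1)) (by linarith : a < a + 1) hcont hderiv
  have hc0 : 0 < c := lt_trans ha0 hc.1
  have hkey : (a+1)^(-p) - a^(-p) = (-p) * c^(-p-1) := by
    rw [hceq]; simp
  have hmono : c^(-p-1) ≤ a^(-p-1) := by
    rw [show (-p-1 : ℝ) = -(p+1) by ring, Real.rpow_neg hc0.le, Real.rpow_neg ha0.le]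
    apply inv_anti₀ (Real.rpow_pos_of_pos ha0 _)
    exact Real.rpow_le_rpow ha0.le hc.1.le (by linarith)
  nlinarith [hkey, hmono, hp]

lemma rpow_two_mul (x : ℝ) (hx : 0 ≤ x) (t : ℝ) : (x^2)^t = x^(2*t) := by
  rw [← Real.rpow_natCast x 2, ← Real.rpow_mul hx]
  norm_num

lemma tail_sum_ge (t : ℝ) (ht : 1/2 < t) (m : ℕ) (hm : 1 ≤ m) :
    (0.45:ℝ)^t * ((m:ℝ)+1)^(-(2*t-1)) / (2*t-1) ≤ ∑' k : ℕ, Dnorm 1 (m + 1 + k) ^ t := by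
  set p : ℝ := 2*t - 1 with hpdef
  have hp : 0 < p := by rw [hpdef]; linarith
  have ht0 : 0 < t := by linarith
  have hm1 : (1:ℝ) ≤ (m:ℝ) := by exact_mod_cast hm
  have hbase : ∀ k : ℕ, (1:ℝ) ≤ (m:ℝ) + 1 + k := by
    intro k; have := Nat.cast_nonneg (α := ℝ) k; linarith
  have hbase0 : ∀ k : ℕ, (0:ℝ) < (m:ℝ) + 1 + k := fun k => lt_of_lt_of_le one_pos (hbase k)
  set G : ℕ → ℝ := fun k => ((m:ℝ)+1+k)^(-p) with hG
  -- telescoping HasSum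
  have hGstep : ∀ k : ℕ, G (k+1) ≤ G k := by
    intro k
    simp only [hG]
    rw [Real.rpow_neg (hbase0 k).le, Real.rpow_neg (hbase0 (k+1)).le]
    apply inv_anti₀ (Real.rpow_pos_of_pos (hbase0 k) p)
    apply Real.rpow_le_rpow (hbase0 k).le (by push_cast; linarith) hp.le
  have hGto0 : Filter.Tendsto G Filter.atTop (nhds 0) := by
    have h1 : Filter.Tendsto (fun k : ℕ => (m:ℝ) + 1 + k) Filter.atTop Filter.atTop := by
      apply Filter.tendsto_atTop_add_const_left
      exact tendsto_natCast_atTop_atTop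
    exact (tendsto_rpow_neg_atTop hp).comp h1
  have hGs : HasSum (fun k => G k - G (k+1)) (G 0) := by
    rw [hasSum_iff_tendsto_nat_of_nonneg (fun k => sub_nonneg.2 (hGstep k)) (G 0)]
    have : ∀ K : ℕ, ∑ i ∈ Finset.range K, (G i - G (i+1)) = G 0 - G K := by
      intro K; exact Finset.sum_range_sub' G K
    simp only [this]
    simpa using Filter.Tendsto.sub (tendsto_const_nhds (x := G 0)) hGto0
  have hGs' : HasSum (fun k => (G k - G (k+1))/p) (G 0 / p) := hGs.div_const p
  -- per-term comparisons
  have hstep2 : ∀ k : ℕ, (G k - G (k+1))/p ≤ ((m:ℝ)+1+k)^(-(2*t)) := by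
    intro k
    have h1 : G (k+1) = ((m:ℝ)+1+k+1)^(-p) := by
      simp only [hG]; push_cast; ring_nf
    have h2 := tele_ineq p ((m:ℝ)+1+k) hp (hbase k)
    rw [div_le_iff₀ hp]
    calc G k - G (k+1) = ((m:ℝ)+1+k)^(-p) - ((m:ℝ)+1+k+1)^(-p) := by rw [h1]
      _ ≤ p * ((m:ℝ)+1+k)^(-p-1) := h2
      _ = ((m:ℝ)+1+k)^(-(2*t)) * p := by
          rw [show (-p-1 : ℝ) = -(2*t) by rw [hpdef]; ring]; ring
  have hsum2 : Summable (fun k : ℕ => ((m:ℝ)+1+k)^(-(2*t))) := by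
    have h0 : Summable (fun k : ℕ => ((k:ℝ))^(-(2*t))) :=
      Real.summable_nat_rpow.mpr (by linarith)
    have h1 := (summable_nat_add_iff (f := fun k : ℕ => ((k:ℝ))^(-(2*t))) (m+1)).mpr h0
    apply h1.congr
    intro k
    congr 1
    push_cast
    ring
  have hDnn : ∀ k : ℕ, (0:ℝ) ≤ Dnorm 1 (m+1+k) := fun k => Dnorm_nonneg _ (by omega)
  -- lower bound terms
  have hterm : ∀ k : ℕ, (0.45:ℝ)^t * ((m:ℝ) + 1 + k)^(-(2*t)) ≤ Dnorm 1 (m + 1 + k) ^ t := by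
    intro k
    set x : ℝ := (m:ℝ) + 1 + k with hx
    have hb := hbase k
    have hb0 := hbase0 k
    have hxn : ((m + 1 + k : ℕ) : ℝ) = x := by rw [hx]; push_cast; ring
    have h2 : (2:ℝ) ≤ x := by
      rw [hx]; have := Nat.cast_nonneg (α := ℝ) k; linarith
    have hlow : (0.45:ℝ) / x^2 ≤ Dnorm 1 (m + 1 + k) := by
      refine le_trans ?_ (Dnorm_ge (m+1+k) (by omega))
      rw [hxn]
      rw [div_le_div_iff₀ (by positivity) (by nlinarith [lam_gt])]
      nlinarith [lam_lt, lam_gt]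
    have hmono := Real.rpow_le_rpow (by positivity) hlow ht0.le
    refine le_trans (le_of_eq ?_) hmono
    rw [Real.div_rpow (by norm_num) (by positivity), rpow_two_mul x hb0.le t,
      Real.rpow_neg hb0.le, div_eq_mul_inv]
  -- upper bound terms (for summability)
  have hupper : ∀ k : ℕ, Dnorm 1 (m + 1 + k) ^ t ≤ ((3:ℝ)/2)^t * ((m:ℝ)+1+k)^(-(2*t)) := by
    intro k
    set x : ℝ := (m:ℝ) + 1 + k with hx
    have hb0 := hbase0 k
    have hxn : ((m + 1 + k : ℕ) : ℝ) = x := by rw [hx]; push_cast; ring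
    have hhi : Dnorm 1 (m + 1 + k) ≤ (3/2 : ℝ) / x^2 := by
      refine le_trans (Dnorm_le (m+1+k) (by omega)) (le_of_eq ?_)
      rw [hxn, div_div]
    have hmono := Real.rpow_le_rpow (hDnn k) hhi ht0.le
    refine le_trans hmono (le_of_eq ?_)
    rw [Real.div_rpow (by norm_num) (by positivity), rpow_two_mul x hb0.le t,
      Real.rpow_neg hb0.le, div_eq_mul_inv]
  have hsumf : Summable (fun k : ℕ => Dnorm 1 (m + 1 + k) ^ t) := by
    apply Summable.of_nonneg_of_le (fun k => Real.rpow_nonneg (hDnn k) t) hupper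
    exact hsum2.mul_left _
  -- chain
  have hchain1 : ∑' k : ℕ, (G k - G (k+1))/p ≤ ∑' k : ℕ, ((m:ℝ)+1+k)^(-(2*t)) :=
    Summable.tsum_le_tsum hstep2 hGs'.summable hsum2
  have hchain2 : ∑' k : ℕ, (0.45:ℝ)^t * ((m:ℝ)+1+k)^(-(2*t))
      ≤ ∑' k : ℕ, Dnorm 1 (m + 1 + k) ^ t :=
    Summable.tsum_le_tsum hterm (hsum2.mul_left _) hsumf
  rw [tsum_mul_left] at hchain2
  rw [hGs'.tsum_eq] at hchain1
  have h045 : (0:ℝ) ≤ (0.45:ℝ)^t := Real.rpow_nonneg (by norm_num) t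
  calc (0.45:ℝ)^t * ((m:ℝ)+1)^(-(2*t-1)) / (2*t-1) = (0.45:ℝ)^t * (G 0 / p) := by
        rw [hG]
        simp only [Nat.cast_zero, add_zero, ← hpdef]
        ring
    _ ≤ (0.45:ℝ)^t * ∑' k : ℕ, ((m:ℝ)+1+k)^(-(2*t)) := by
        apply mul_le_mul_of_nonneg_left hchain1 h045
    _ ≤ ∑' k : ℕ, Dnorm 1 (m + 1 + k) ^ t := hchain2

lemma cond_iff (K t : ℝ) (hK : 1 ≤ K) (ht : 1/2 < t) (M : ℕ) (hM : 1 ≤ M) :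
    (K ^ (2*t) * (3.821:ℝ)^t / (M:ℝ)^(2*t) ≤ 6 * (0.45:ℝ)^t / ((2*t-1) * ((M:ℝ)+1)^(2*t-1)))
    ↔ (2*t-1) * (K^2 * 3.821 * ((M:ℝ)+1)^2 / (0.45 * (M:ℝ)^2))^t ≤ 6 * ((M:ℝ)+1) := by
  have hx1 : (1:ℝ) ≤ (M:ℝ) := by exact_mod_cast hM
  have hx0 : (0:ℝ) < (M:ℝ) := by linarith
  have hx10 : (0:ℝ) < (M:ℝ) + 1 := by linarith
  have hq : (0:ℝ) < 2*t - 1 := by linarith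
  have hK0 : (0:ℝ) < K := by linarith
  have hB : (0:ℝ) < (M:ℝ)^(2*t) := Real.rpow_pos_of_pos hx0 _
  have hD : (0:ℝ) < ((M:ℝ)+1)^(2*t-1) := Real.rpow_pos_of_pos hx10 _
  have hCq : (0:ℝ) < (0.45:ℝ)^t := Real.rpow_pos_of_pos (by norm_num) t
  have hA1 : (0:ℝ) < K^(2*t) := Real.rpow_pos_of_pos hK0 _
  have hA2 : (0:ℝ) < (3.821:ℝ)^t := Real.rpow_pos_of_pos (by norm_num) t
  have hCt : (K^2 * 3.821 * ((M:ℝ)+1)^2 / (0.45 * (M:ℝ)^2))^t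
      = K^(2*t) * (3.821:ℝ)^t * ((M:ℝ)+1)^(2*t) / ((0.45:ℝ)^t * (M:ℝ)^(2*t)) := by
    rw [Real.div_rpow (by positivity) (by positivity),
      Real.mul_rpow (by positivity) (by positivity),
      Real.mul_rpow (by positivity) (by positivity),
      Real.mul_rpow (by norm_num) (by positivity),
      rpow_two_mul K (by linarith), rpow_two_mul ((M:ℝ)+1) hx10.le, rpow_two_mul (M:ℝ) hx0.le]
  have hsplit := Real.rpow_add hx10 (2*t-1) 1
  rw [Real.rpow_one, sub_add_cancel] at hsplit
  rw [div_le_div_iff₀ hB (by positivity), hCt, ← mul_div_assoc,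
    div_le_iff₀ (by positivity), hsplit]
  constructor
  · intro h
    have h2 := mul_le_mul_of_nonneg_right h hx10.le
    nlinarith [h2]
  · intro h
    have h3 : (K ^ (2*t) * 3.821^t * ((2*t-1) * ((M:ℝ)+1)^(2*t-1))) * ((M:ℝ)+1)
        ≤ (6 * 0.45^t * (M:ℝ)^(2*t)) * ((M:ℝ)+1) := by nlinarith [h]
    exact le_of_mul_le_mul_right h3 hx10

lemma C_ge_one (K : ℝ) (hK : 1 ≤ K) (M : ℕ) (hM : 1 ≤ M) :
    (1:ℝ) ≤ K^2 * 3.821 * ((M:ℝ)+1)^2 / (0.45 * (M:ℝ)^2) := by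
  have hx1 : (1:ℝ) ≤ (M:ℝ) := by exact_mod_cast hM
  have hx0 : (0:ℝ) < (M:ℝ) := by linarith
  rw [le_div_iff₀ (by positivity)]
  nlinarith [hx1, hK, sq_nonneg ((M:ℝ) - 1), sq_nonneg (K - 1)]

lemma C_mono (K : ℝ) (hK : 1 ≤ K) (N M : ℕ) (hN : 1 ≤ N) (hNM : N ≤ M) :
    K^2 * 3.821 * ((M:ℝ)+1)^2 / (0.45 * (M:ℝ)^2)
      ≤ K^2 * 3.821 * ((N:ℝ)+1)^2 / (0.45 * (N:ℝ)^2) := by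
  have hn1 : (1:ℝ) ≤ (N:ℝ) := by exact_mod_cast hN
  have hm1 : (1:ℝ) ≤ (M:ℝ) := le_trans hn1 (by exact_mod_cast hNM)
  have hnm : (N:ℝ) ≤ (M:ℝ) := by exact_mod_cast hNM
  have hn0 : (0:ℝ) < (N:ℝ) := by linarith
  have hm0 : (0:ℝ) < (M:ℝ) := by linarith
  rw [div_le_div_iff₀ (by positivity) (by positivity)]
  have hK2 : (0:ℝ) < K^2 := by positivity
  nlinarith [mul_le_mul_of_nonneg_left
    (show ((M:ℝ)+1) * (N:ℝ) ≤ ((N:ℝ)+1) * (M:ℝ) by nlinarith)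
    (show (0:ℝ) ≤ ((M:ℝ)+1) * (N:ℝ) + ((N:ℝ)+1) * (M:ℝ) by nlinarith),
    hK2, mul_pos hn0 hm0, sq_nonneg (K*((M:ℝ)+1)*(N:ℝ))]

end Apol

open Apol

/-- If 6·(0.45)^t/((2t−1)(N+1)^{2t−1}) ≥ K^{2t}·(3.821)^t/N^{2t} for some K ≥ 1,
t > 1/2 and N ≥ 1, then (i) 6·Σ_{n>M} ‖φ'_n‖_∞^t ≥ K^{2t}·‖φ'_M‖_∞^t for every M ≥ N,
and (ii) the hypothesis inequality persists for every s with 1/2 < s ≤ t. -/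
theorem apollonian_sufficient_tail_condition (K t : ℝ) (hK : 1 ≤ K) (ht : 1 / 2 < t)
    (N : ℕ) (hN : 1 ≤ N)
    (h : K ^ (2 * t) * (3.821 : ℝ) ^ t / (N : ℝ) ^ (2 * t) ≤
      6 * (0.45 : ℝ) ^ t / ((2 * t - 1) * ((N : ℝ) + 1) ^ (2 * t - 1))) :
    (∀ M : ℕ, N ≤ M →
      K ^ (2 * t) * Dnorm 1 M ^ t ≤ 6 * ∑' n : ℕ, Dnorm 1 (M + 1 + n) ^ t) ∧
    (∀ s : ℝ, 1 / 2 < s → s ≤ t →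
      K ^ (2 * s) * (3.821 : ℝ) ^ s / (N : ℝ) ^ (2 * s) ≤
        6 * (0.45 : ℝ) ^ s / ((2 * s - 1) * ((N : ℝ) + 1) ^ (2 * s - 1))) := by
  have ht0 : (0:ℝ) < t := by linarith
  have hCN1 : (1:ℝ) ≤ K^2 * 3.821 * ((N:ℝ)+1)^2 / (0.45 * (N:ℝ)^2) := C_ge_one K hK N hN
  have hcondN : (2*t-1) * (K^2 * 3.821 * ((N:ℝ)+1)^2 / (0.45 * (N:ℝ)^2))^t ≤ 6 * ((N:ℝ)+1) :=
    (cond_iff K t hK ht N hN).mp h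
  constructor
  · intro M hMN
    have hM1 : 1 ≤ M := le_trans hN hMN
    have hx1 : (1:ℝ) ≤ (M:ℝ) := by exact_mod_cast hM1
    have hx0 : (0:ℝ) < (M:ℝ) := by linarith
    have hx10 : (0:ℝ) < (M:ℝ) + 1 := by linarith
    have hq : (0:ℝ) < 2*t-1 := by linarith
    have hNM : ((N:ℝ)) ≤ (M:ℝ) := by exact_mod_cast hMN
    have hCM1 := C_ge_one K hK M hM1
    have hCmono := C_mono K hK N M hN hMN
    have hCt : (K^2 * 3.821 * ((M:ℝ)+1)^2 / (0.45 * (M:ℝ)^2))^t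
        ≤ (K^2 * 3.821 * ((N:ℝ)+1)^2 / (0.45 * (N:ℝ)^2))^t :=
      Real.rpow_le_rpow (by linarith) hCmono ht0.le
    have hcondM : (2*t-1) * (K^2 * 3.821 * ((M:ℝ)+1)^2 / (0.45 * (M:ℝ)^2))^t
        ≤ 6 * ((M:ℝ)+1) := by
      calc (2*t-1) * (K^2 * 3.821 * ((M:ℝ)+1)^2 / (0.45 * (M:ℝ)^2))^t
          ≤ (2*t-1) * (K^2 * 3.821 * ((N:ℝ)+1)^2 / (0.45 * (N:ℝ)^2))^t :=
            mul_le_mul_of_nonneg_left hCt hq.le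
        _ ≤ 6 * ((N:ℝ)+1) := hcondN
        _ ≤ 6 * ((M:ℝ)+1) := by linarith
    have hcM := (cond_iff K t hK ht M hM1).mpr hcondM
    -- Dnorm upper bound in rpow form
    have hDle : Dnorm 1 M ^ t ≤ (3.821:ℝ)^t / (M:ℝ)^(2*t) := by
      have h1 : Dnorm 1 M ≤ (3.821:ℝ) / (M:ℝ)^2 := by
        refine le_trans (Dnorm_le M hM1) ?_
        rw [div_le_div_iff₀ (by positivity) (by positivity)]
        nlinarith
      have h2 := Real.rpow_le_rpow (Dnorm_nonneg M hM1) h1 ht0.le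
      refine le_trans h2 (le_of_eq ?_)
      rw [Real.div_rpow (by norm_num) (by positivity), rpow_two_mul (M:ℝ) hx0.le]
    have hK2t : (0:ℝ) < K^(2*t) := Real.rpow_pos_of_pos (by linarith) _
    have htail := tail_sum_ge t ht M hM1
    calc K ^ (2*t) * Dnorm 1 M ^ t ≤ K ^ (2*t) * ((3.821:ℝ)^t / (M:ℝ)^(2*t)) :=
          mul_le_mul_of_nonneg_left hDle hK2t.le
      _ = K ^ (2*t) * (3.821:ℝ)^t / (M:ℝ)^(2*t) := by ring
      _ ≤ 6 * (0.45:ℝ)^t / ((2*t-1) * ((M:ℝ)+1)^(2*t-1)) := hcM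
      _ = 6 * ((0.45:ℝ)^t * ((M:ℝ)+1)^(-(2*t-1)) / (2*t-1)) := by
          rw [Real.rpow_neg hx10.le]
          have hD : (0:ℝ) < ((M:ℝ)+1)^(2*t-1) := Real.rpow_pos_of_pos hx10 _
          field_simp
      _ ≤ 6 * ∑' n : ℕ, Dnorm 1 (M + 1 + n) ^ t := by linarith [htail]
  · intro s hs hst
    have hs0 : (0:ℝ) < s := by linarith
    apply (cond_iff K s hK hs N hN).mpr
    have hpow : (K^2 * 3.821 * ((N:ℝ)+1)^2 / (0.45 * (N:ℝ)^2))^s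
        ≤ (K^2 * 3.821 * ((N:ℝ)+1)^2 / (0.45 * (N:ℝ)^2))^t :=
      Real.rpow_le_rpow_of_exponent_le hCN1 hst
    have hnn : (0:ℝ) ≤ (K^2 * 3.821 * ((N:ℝ)+1)^2 / (0.45 * (N:ℝ)^2))^s :=
      Real.rpow_nonneg (by linarith) s
    calc (2*s-1) * (K^2 * 3.821 * ((N:ℝ)+1)^2 / (0.45 * (N:ℝ)^2))^s
        ≤ (2*t-1) * (K^2 * 3.821 * ((N:ℝ)+1)^2 / (0.45 * (N:ℝ)^2))^t := by
          apply mul_le_mul (by linarith) hpow hnn (by linarith)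
      _ ≤ 6 * ((N:ℝ)+1) := hcondN


end
end
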